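/- Define φ₂(p) = sin²p / p² + 3(2p − sin 2p)² / (16p⁴) − 1 for p ≠ 0. Then φ₂(p) < 0 for all p with 0 < |p| ≤ π. (Geometrically: the half-ellipse r² + 12z² = 1, r ≥ 0, lies outside the curve r = sin p / p, z = (2p − sin 2p)/(8p²), p ∈ [−π, π], which is the profile of the unit sub-Riemannian sphere of the Heisenberg group, meeting it only at the point (r,z) = (1,0).) -/

import Mathlib

open Real

/-- Generic helper: a function vanishing at `0` with nonnegative derivative on `[0,∞)`
is nonnegative on `[0,∞)`. -/
lemma nonneg_of_deriv_nonneg {f f' : ℝ → ℝ} (hd : ∀ y, HasDerivAt f (f' y) y)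
    (h0 : f 0 = 0) (hf' : ∀ y, 0 ≤ y → 0 ≤ f' y) {x : ℝ} (hx : 0 ≤ x) : 0 ≤ f x := by
  have hm : MonotoneOn f (Set.Ici 0) := by
    apply monotoneOn_of_deriv_nonneg (convex_Ici 0)
    · exact Continuous.continuousOn
        (Differentiable.continuous (fun y => (hd y).differentiableAt))
    · intro y _
      exact (hd y).differentiableAt.differentiableWithinAt
    · intro y hy
      rw [(hd y).deriv]
      refine hf' y ?_
      simp only [interior_Ici, Set.mem_Ioi] at hy
      exact hy.le
  have h := hm Set.self_mem_Ici hx hx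
  linarith [h, h0 ▸ h]

lemma sin_ge_t3 {x : ℝ} (hx : 0 ≤ x) : x - x ^ 3 / 6 ≤ Real.sin x := by
  have h := nonneg_of_deriv_nonneg
    (f := fun y => Real.sin y - (y - y ^ 3 / 6))
    (f' := fun y => Real.cos y - (1 - y ^ 2 / 2))
    (fun y => by
      have h2 : HasDerivAt (fun y : ℝ => y - y ^ 3 / 6) (1 - y ^ 2 / 2) y := by
        have := (hasDerivAt_id y).sub ((hasDerivAt_pow 3 y).div_const 6)
        refine this.congr_deriv ?_; push_cast; ring
      exact (Real.hasDerivAt_sin y).sub h2)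
    (by norm_num)
    (fun y _ => by linarith [Real.one_sub_sq_div_two_le_cos (x := y)]) hx
  simpa using h

lemma cos_le_t4 {x : ℝ} (hx : 0 ≤ x) : Real.cos x ≤ 1 - x ^ 2 / 2 + x ^ 4 / 24 := by
  have h := nonneg_of_deriv_nonneg
    (f := fun y => 1 - y ^ 2 / 2 + y ^ 4 / 24 - Real.cos y)
    (f' := fun y => Real.sin y - (y - y ^ 3 / 6))
    (fun y => by
      have h2 : HasDerivAt (fun y : ℝ => 1 - y ^ 2 / 2 + y ^ 4 / 24)
          (-(y - y ^ 3 / 6)) y := by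
        have := ((hasDerivAt_const y (1:ℝ)).sub ((hasDerivAt_pow 2 y).div_const 2)).add
          ((hasDerivAt_pow 4 y).div_const 24)
        refine this.congr_deriv ?_; push_cast; ring
      have := h2.sub (Real.hasDerivAt_cos y)
      exact this.congr_deriv (by ring))
    (by norm_num)
    (fun y hy => by linarith [sin_ge_t3 hy]) hx
  simpa using h

lemma sin_le_t5 {x : ℝ} (hx : 0 ≤ x) : Real.sin x ≤ x - x ^ 3 / 6 + x ^ 5 / 120 := by
  have h := nonneg_of_deriv_nonneg
    (f := fun y => y - y ^ 3 / 6 + y ^ 5 / 120 - Real.sin y)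
    (f' := fun y => 1 - y ^ 2 / 2 + y ^ 4 / 24 - Real.cos y)
    (fun y => by
      have h2 : HasDerivAt (fun y : ℝ => y - y ^ 3 / 6 + y ^ 5 / 120)
          (1 - y ^ 2 / 2 + y ^ 4 / 24) y := by
        have := ((hasDerivAt_id y).sub ((hasDerivAt_pow 3 y).div_const 6)).add
          ((hasDerivAt_pow 5 y).div_const 120)
        refine this.congr_deriv ?_; push_cast; ring
      exact h2.sub (Real.hasDerivAt_sin y))
    (by norm_num)
    (fun y hy => by linarith [cos_le_t4 hy]) hx
  simpa using h

lemma cos_ge_t6 {x : ℝ} (hx : 0 ≤ x) :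
    1 - x ^ 2 / 2 + x ^ 4 / 24 - x ^ 6 / 720 ≤ Real.cos x := by
  have h := nonneg_of_deriv_nonneg
    (f := fun y => Real.cos y - (1 - y ^ 2 / 2 + y ^ 4 / 24 - y ^ 6 / 720))
    (f' := fun y => (y - y ^ 3 / 6 + y ^ 5 / 120) - Real.sin y)
    (fun y => by
      have h2 : HasDerivAt (fun y : ℝ => 1 - y ^ 2 / 2 + y ^ 4 / 24 - y ^ 6 / 720)
          (-(y - y ^ 3 / 6 + y ^ 5 / 120)) y := by
        have := (((hasDerivAt_const y (1:ℝ)).sub ((hasDerivAt_pow 2 y).div_const 2)).add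
          ((hasDerivAt_pow 4 y).div_const 24)).sub ((hasDerivAt_pow 6 y).div_const 720)
        refine this.congr_deriv ?_; push_cast; ring
      have := (Real.hasDerivAt_cos y).sub h2
      exact this.congr_deriv (by ring))
    (by norm_num)
    (fun y hy => by linarith [sin_le_t5 hy]) hx
  simpa using h

lemma sin_ge_t7 {x : ℝ} (hx : 0 ≤ x) :
    x - x ^ 3 / 6 + x ^ 5 / 120 - x ^ 7 / 5040 ≤ Real.sin x := by
  have h := nonneg_of_deriv_nonneg
    (f := fun y => Real.sin y - (y - y ^ 3 / 6 + y ^ 5 / 120 - y ^ 7 / 5040))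
    (f' := fun y => Real.cos y - (1 - y ^ 2 / 2 + y ^ 4 / 24 - y ^ 6 / 720))
    (fun y => by
      have h2 : HasDerivAt (fun y : ℝ => y - y ^ 3 / 6 + y ^ 5 / 120 - y ^ 7 / 5040)
          (1 - y ^ 2 / 2 + y ^ 4 / 24 - y ^ 6 / 720) y := by
        have := (((hasDerivAt_id y).sub ((hasDerivAt_pow 3 y).div_const 6)).add
          ((hasDerivAt_pow 5 y).div_const 120)).sub ((hasDerivAt_pow 7 y).div_const 5040)
        refine this.congr_deriv ?_; push_cast; ring
      exact (Real.hasDerivAt_sin y).sub h2)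
    (by norm_num)
    (fun y hy => by linarith [cos_ge_t6 hy]) hx
  simpa using h

/-- The key inequality: `2q²(1 − cos q) + 3(q − sin q)² < q⁴` for `0 < q ≤ 2π`. -/
lemma key_ineq {q : ℝ} (h0 : 0 < q) (h2 : q ≤ 2 * Real.pi) :
    2 * q ^ 2 * (1 - Real.cos q) + 3 * (q - Real.sin q) ^ 2 < q ^ 4 := by
  have hs0 : 0 ≤ q - Real.sin q := by linarith [Real.sin_le h0.le]
  rcases le_or_gt q 4 with h4 | h4
  · -- Taylor branch
    have hc := cos_ge_t6 h0.le
    have hs := sin_ge_t7 h0.le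
    have hU : q - Real.sin q ≤ q ^ 3 / 6 - q ^ 5 / 120 + q ^ 7 / 5040 := by linarith
    have hsq : (q - Real.sin q) ^ 2 ≤ (q ^ 3 / 6 - q ^ 5 / 120 + q ^ 7 / 5040) ^ 2 := by
      have := mul_self_le_mul_self hs0 hU
      simpa [pow_two] using this
    have hV : 1 - Real.cos q ≤ q ^ 2 / 2 - q ^ 4 / 24 + q ^ 6 / 720 := by linarith
    have h16 : (0:ℝ) ≤ 16 - q ^ 2 := by nlinarith
    have t1 : (0:ℝ) ≤ q ^ 8 * ((16 - q ^ 2) * q ^ 4) :=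
      mul_nonneg (pow_nonneg h0.le 8) (mul_nonneg h16 (pow_nonneg h0.le 4))
    have t2 : (0:ℝ) ≤ q ^ 8 * (q ^ 2 - 25) ^ 2 :=
      mul_nonneg (pow_nonneg h0.le 8) (sq_nonneg _)
    have t3 : (0:ℝ) < q ^ 8 * (4540 - 44 * q ^ 2) :=
      mul_pos (pow_pos h0 8) (by nlinarith)
    have hq2 : (0:ℝ) < q ^ 2 := pow_pos h0 2
    nlinarith [hsq, hV, t1, t2, t3, hq2]
  · -- crude branch, 4 < q
    have hc : -1 ≤ Real.cos q := Real.neg_one_le_cos q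
    have hsin : -1 ≤ Real.sin q := Real.neg_one_le_sin q
    have hU : q - Real.sin q ≤ q + 1 := by linarith
    have hsq : (q - Real.sin q) ^ 2 ≤ (q + 1) ^ 2 := by
      have := mul_self_le_mul_self hs0 hU
      simpa [pow_two] using this
    nlinarith [hsq, sq_nonneg (q - 4), sq_nonneg q, mul_pos h0 h0]

/-- The restriction of `f₂(r,z) = r² + 12z² − 1` to the profile curve of the unit
sub-Riemannian sphere of the Heisenberg group. -/
noncomputable def φ₂ (p : ℝ) : ℝ :=
  Real.sin p ^ 2 / p ^ 2 + 3 * (2 * p - Real.sin (2 * p)) ^ 2 / (16 * p ^ 4) - 1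

lemma main_pos {p : ℝ} (hp : 0 < p) (hπ : p ≤ Real.pi) : φ₂ p < 0 := by
  have hkey := key_ineq (q := 2 * p) (by linarith) (by linarith)
  have hp2 : (0:ℝ) < p ^ 2 := pow_pos hp 2
  have hp4 : (0:ℝ) < 16 * p ^ 4 := by positivity
  have hsin2 : Real.sin p ^ 2 = 1 / 2 - Real.cos (2 * p) / 2 := Real.sin_sq_eq_half_sub p
  unfold φ₂
  rw [sub_neg]
  have e1 : Real.sin p ^ 2 / p ^ 2 + 3 * (2 * p - Real.sin (2 * p)) ^ 2 / (16 * p ^ 4)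
      = (2 * (2 * p) ^ 2 * (1 - Real.cos (2 * p)) + 3 * (2 * p - Real.sin (2 * p)) ^ 2)
        / (16 * p ^ 4) := by
    rw [hsin2]
    field_simp
    ring
  rw [e1, div_lt_one hp4]
  calc 2 * (2 * p) ^ 2 * (1 - Real.cos (2 * p)) + 3 * (2 * p - Real.sin (2 * p)) ^ 2
      < (2 * p) ^ 4 := hkey
    _ = 16 * p ^ 4 := by ring

theorem stmt12 : ∀ p : ℝ, 0 < |p| → |p| ≤ Real.pi → φ₂ p < 0 := by
  intro p hp hπ
  rcases abs_cases p with ⟨he, _⟩ | ⟨he, _⟩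
  · exact main_pos (he ▸ hp) (he ▸ hπ)
  · have heq : φ₂ p = φ₂ (-p) := by
      unfold φ₂
      rw [show (2 : ℝ) * -p = -(2 * p) by ring, Real.sin_neg, Real.sin_neg]
      ring_nf
    rw [heq]
    exact main_pos (he ▸ hp) (he ▸ hπ)
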